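/- arXiv:1705.10770 — 2 statements merged into one kernel-verified Lean document; each statement's English description precedes it below -/
import Mathlib

section
/- (Lemma 2.) Let (V_i)_{i ∈ ι} be a finite family of random variables on a standard Borel probability space, let T be a random variable, let S ⊆ ι be a set of selected indices, and let R = ι \ S. Assume that for every r ∈ R, T is conditionally independent of V_r given the family (V_j)_{j ∈ S}. If there exists s ∈ S such that T is conditionally independent of V_s given (V_j)_{j ∈ S \ {s}}, then for every r ∈ R, T is conditionally independent of V_r given (V_j)_{j ∈ S \ {s}}. -/
open ProbabilityTheory MeasureTheory

/-- The σ-algebra generated jointly by the variables `V j`, `j ∈ B`. -/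
def famAlg {Ω ι : Type*} (V : ι → Ω → ℝ) (B : Set ι) : MeasurableSpace Ω :=
  ⨆ j ∈ B, MeasurableSpace.comap (V j) inferInstance

theorem famAlg_le {Ω ι : Type*} {mΩ : MeasurableSpace Ω} {V : ι → Ω → ℝ}
    (hV : ∀ i, Measurable (V i)) (B : Set ι) : famAlg V B ≤ mΩ :=
  iSup₂_le fun j _ => (hV j).comap_le

/-- `T ⫫ V i | (V_j)_{j ∈ B}`: the σ-algebra generated by `T` is conditionally independent of
the σ-algebra generated by `V i` given the σ-algebra generated jointly by `(V_j)_{j ∈ B}`. -/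
def CondIndepVarFam {Ω ι : Type*} {mΩ : MeasurableSpace Ω} [StandardBorelSpace Ω]
    (μ : Measure Ω) [IsFiniteMeasure μ] (T : Ω → ℝ) (V : ι → Ω → ℝ)
    (hV : ∀ i, Measurable (V i)) (i : ι) (B : Set ι) : Prop :=
  CondIndep (famAlg V B) (MeasurableSpace.comap T inferInstance)
    (MeasurableSpace.comap (V i) inferInstance) (famAlg_le hV B) μ

lemma indicator_bound {Ω : Type*} {m mΩ : MeasurableSpace Ω}
    {μ : Measure Ω} [IsProbabilityMeasure μ] {A : Set Ω} (hA : MeasurableSet[mΩ] A) :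
    ∀ᵐ x ∂μ, ‖(μ[A.indicator (fun _ => (1:ℝ)) | m]) x‖ ≤ 1 := by
  by_cases hm : m ≤ mΩ
  · have h0 : 0 ≤ᵐ[μ] μ[A.indicator (fun _ => (1:ℝ)) | m] :=
      condExp_nonneg (Filter.Eventually.of_forall fun x =>
        Set.indicator_nonneg (fun _ _ => zero_le_one) x)
    have hfi : Integrable (A.indicator fun _ => (1:ℝ)) μ :=
      Integrable.indicator (integrable_const 1) hA
    have h1 : μ[A.indicator (fun _ => (1:ℝ)) | m] ≤ᵐ[μ] μ[(fun _ => (1:ℝ)) | m] :=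
      condExp_mono hfi (integrable_const 1)
        (Filter.Eventually.of_forall fun x => Set.indicator_le_self' (fun _ _ => zero_le_one) x)
    rw [condExp_const hm] at h1
    filter_upwards [h0, h1] with x hx0 hx1
    rw [Real.norm_eq_abs, abs_le]
    simp only [Pi.zero_apply] at hx0
    exact ⟨by linarith, hx1⟩
  · simp [condExp_of_not_le hm]

lemma condexp_indicator_sup_of_condIndep {Ω : Type*} {m' ma mb mΩ : MeasurableSpace Ω}
    [StandardBorelSpace Ω] {μ : Measure Ω} [IsProbabilityMeasure μ]
    (hm' : m' ≤ mΩ) (hma : ma ≤ mΩ) (hmb : mb ≤ mΩ)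
    (h : CondIndep m' ma mb hm' μ) {A : Set Ω} (hA : MeasurableSet[ma] A) :
    (μ[A.indicator (fun _ => (1:ℝ)) | m']) =ᵐ[μ] μ[A.indicator (fun _ => (1:ℝ)) | m' ⊔ mb] := by
  set f := A.indicator (fun _ => (1:ℝ)) with hf_def
  have hm2 : m' ⊔ mb ≤ mΩ := sup_le hm' hmb
  have hfA : MeasurableSet[mΩ] A := hma _ hA
  have hf_int : Integrable f μ := (integrable_const 1).indicator hfA
  have hgen : (m' ⊔ mb) = MeasurableSpace.generateFrom
      {t | ∃ c d, MeasurableSet[m'] c ∧ MeasurableSet[mb] d ∧ t = c ∩ d} := by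
    apply le_antisymm
    · refine sup_le ?_ ?_
      · exact fun c hc => MeasurableSpace.measurableSet_generateFrom
          ⟨c, Set.univ, hc, MeasurableSet.univ, (Set.inter_univ c).symm⟩
      · exact fun d hd => MeasurableSpace.measurableSet_generateFrom
          ⟨Set.univ, d, MeasurableSet.univ, hd, (Set.univ_inter d).symm⟩
    · refine MeasurableSpace.generateFrom_le ?_
      rintro t ⟨c, d, hc, hd, rfl⟩
      exact ((le_sup_left : m' ≤ m' ⊔ mb) c hc).inter ((le_sup_right : mb ≤ m' ⊔ mb) d hd)
  have hpi : IsPiSystem {t | ∃ c d, MeasurableSet[m'] c ∧ MeasurableSet[mb] d ∧ t = c ∩ d} := by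
    rintro t1 ⟨c1, d1, hc1, hd1, rfl⟩ t2 ⟨c2, d2, hc2, hd2, rfl⟩ -
    exact ⟨c1 ∩ c2, d1 ∩ d2, hc1.inter hc2, hd1.inter hd2, by ext x; simp; tauto⟩
  have key : ∀ t, MeasurableSet[m' ⊔ mb] t →
      ∫ x in t, (μ[f|m']) x ∂μ = ∫ x in t, f x ∂μ := by
    intro t ht
    refine MeasurableSpace.induction_on_inter (m := m' ⊔ mb)
      (C := fun t _ => ∫ x in t, (μ[f|m']) x ∂μ = ∫ x in t, f x ∂μ) hgen hpi ?_ ?_ ?_ ?_ t ht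
    · simp
    · rintro u ⟨c, d, hc, hd, rfl⟩
      have hcΩ : MeasurableSet[mΩ] c := hm' _ hc
      have hdΩ : MeasurableSet[mΩ] d := hmb _ hd
      set g := d.indicator (fun _ => (1:ℝ)) with hg_def
      have hg_int : Integrable g μ := (integrable_const 1).indicator hdΩ
      have hprod : μ[(A ∩ d).indicator (fun _ => (1:ℝ)) | m'] =ᵐ[μ] μ[f|m'] * μ[g|m'] :=
        (condIndep_iff m' ma mb hm' hma hmb μ).mp h A d hA hd
      have hcg_int : Integrable (μ[f|m'] * g) μ :=
        hg_int.bdd_mul (stronglyMeasurable_condExp.mono hm').aestronglyMeasurable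
          (indicator_bound hfA)
      have hpull : μ[(μ[f|m']) * g|m'] =ᵐ[μ] μ[f|m'] * μ[g|m'] :=
        condExp_mul_of_stronglyMeasurable_left stronglyMeasurable_condExp hcg_int hg_int
      have lhs_eq : ∫ x in c ∩ d, (μ[f|m']) x ∂μ = ∫ x in c, ((μ[f|m']) * μ[g|m']) x ∂μ := by
        rw [← setIntegral_indicator hdΩ]
        have hieq : d.indicator (fun x => (μ[f|m']) x) = (μ[f|m']) * g := by
          funext x
          by_cases hx : x ∈ d <;>
            simp [hg_def, Set.indicator_of_mem, Set.indicator_of_notMem, hx]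
        rw [hieq, ← setIntegral_condExp hm' hcg_int hc]
        exact setIntegral_congr_ae (hm' _ hc) (hpull.mono fun x hx _ => hx)
      have rhs_eq : ∫ x in c ∩ d, f x ∂μ = ∫ x in c, ((μ[f|m']) * μ[g|m']) x ∂μ := by
        rw [← setIntegral_indicator hdΩ]
        have hieq : d.indicator (fun x => f x) = (A ∩ d).indicator (fun _ => (1:ℝ)) := by
          rw [hf_def, Set.indicator_indicator, Set.inter_comm]
        rw [hieq, ← setIntegral_condExp hm'
          ((integrable_const 1).indicator (hfA.inter hdΩ)) hc]
        exact setIntegral_congr_ae (hm' _ hc) (hprod.mono fun x hx _ => hx)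
      rw [lhs_eq, rhs_eq]
    · intro u hu ihu
      have huΩ : MeasurableSet[mΩ] u := hm2 _ hu
      have e1 := integral_add_compl huΩ hf_int
      have e2 := integral_add_compl huΩ (integrable_condExp (f := f) (m := m') (μ := μ))
      have e3 : ∫ x, (μ[f|m']) x ∂μ = ∫ x, f x ∂μ := integral_condExp hm' (μ := μ) (f := f)
      linarith
    · intro v hdisj hmeas ihv
      rw [integral_iUnion (fun i => hm2 _ (hmeas i)) hdisj
          (integrable_condExp (f := f) (m := m') (μ := μ)).integrableOn,
        integral_iUnion (fun i => hm2 _ (hmeas i)) hdisj hf_int.integrableOn]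
      exact tsum_congr ihv
  exact (ae_eq_condExp_of_forall_setIntegral_eq hm2 hf_int
    (fun s _ _ => integrable_condExp.integrableOn)
    (fun s hs _ => key s hs)
    (StronglyMeasurable.aestronglyMeasurable
      (stronglyMeasurable_condExp.mono (le_sup_left))))

lemma condIndep_contraction {Ω : Type*} {m' ma mb mc m2 mΩ : MeasurableSpace Ω}
    [StandardBorelSpace Ω] {μ : Measure Ω} [IsProbabilityMeasure μ]
    (hm' : m' ≤ mΩ) (hma : ma ≤ mΩ) (hmb : mb ≤ mΩ) (hmc : mc ≤ mΩ)
    (h1 : CondIndep m' ma mb hm' μ)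
    {hm2 : m2 ≤ mΩ} (h2eq : m2 = m' ⊔ mb)
    (h2 : CondIndep m2 ma mc hm2 μ) :
    CondIndep m' ma mc hm' μ := by
  subst h2eq
  rw [condIndep_iff _ _ _ hm2 hma hmc] at h2
  rw [condIndep_iff _ _ _ hm' hma hmc]
  intro A B hA hB
  have hfA : MeasurableSet[mΩ] A := hma _ hA
  have hgB : MeasurableSet[mΩ] B := hmc _ hB
  have h2' := h2 A B hA hB
  have hstepA := condexp_indicator_sup_of_condIndep hm' hma hmb h1 hA
  have hmul_int : Integrable ((μ[A.indicator (fun _ => (1:ℝ))|m']) *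
      μ[B.indicator (fun _ => (1:ℝ))|m' ⊔ mb]) μ :=
    integrable_condExp.bdd_mul
      (stronglyMeasurable_condExp.mono hm').aestronglyMeasurable (indicator_bound hfA)
  have pull : μ[(μ[A.indicator (fun _ => (1:ℝ))|m']) *
        μ[B.indicator (fun _ => (1:ℝ))|m' ⊔ mb] | m'] =ᵐ[μ]
      (μ[A.indicator (fun _ => (1:ℝ))|m']) *
        μ[μ[B.indicator (fun _ => (1:ℝ))|m' ⊔ mb]|m'] :=
    condExp_mul_of_stronglyMeasurable_left stronglyMeasurable_condExp hmul_int integrable_condExp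
  have tower_ab : μ[μ[(A ∩ B).indicator (fun _ => (1:ℝ))|m' ⊔ mb]|m'] =ᵐ[μ]
      μ[(A ∩ B).indicator (fun _ => (1:ℝ))|m'] :=
    condExp_condExp_of_le le_sup_left hm2
  have tower_g : μ[μ[B.indicator (fun _ => (1:ℝ))|m' ⊔ mb]|m'] =ᵐ[μ]
      μ[B.indicator (fun _ => (1:ℝ))|m'] :=
    condExp_condExp_of_le le_sup_left hm2
  refine tower_ab.symm.trans ?_
  refine ((condExp_congr_ae (h2'.trans (hstepA.symm.mul Filter.EventuallyEq.rfl))).trans ?_)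
  exact pull.trans (Filter.EventuallyEq.rfl.mul tower_g)

/-- Lemma 2. -/
theorem lemma2_condIndep {Ω ι : Type*} {mΩ : MeasurableSpace Ω} [StandardBorelSpace Ω]
    [Fintype ι] (μ : Measure Ω) [IsProbabilityMeasure μ]
    (T : Ω → ℝ) (V : ι → Ω → ℝ) (hT : Measurable T) (hV : ∀ i, Measurable (V i))
    (S : Set ι)
    (hrem : ∀ r ∈ Set.univ \ S, CondIndepVarFam μ T V hV r S)
    (s : ι) (hs : s ∈ S) (hsind : CondIndepVarFam μ T V hV s (S \ {s})) :
    ∀ r ∈ Set.univ \ S, CondIndepVarFam μ T V hV r (S \ {s}) := by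
  intro r hr
  have hsplit : famAlg V S = famAlg V (S \ {s}) ⊔ MeasurableSpace.comap (V s) inferInstance := by
    have hS : (S \ {s}) ∪ {s} = S := Set.diff_union_of_subset (Set.singleton_subset_iff.2 hs)
    conv_lhs => rw [← hS]
    rw [show famAlg V ((S \ {s}) ∪ {s}) = famAlg V (S \ {s}) ⊔ famAlg V {s} from iSup_union]
    congr 1
    simp [famAlg]
  exact condIndep_contraction (famAlg_le hV _) hT.comap_le (hV s).comap_le (hV r).comap_le
    hsind hsplit (hrem r hr)
end

section
/- (Invariance of non-addability under a sequence of backward removals; core of the proofs of Theorems 1 and 2.) Let (V_i)_{i ∈ ι} be a finite family of random variables on a standard Borel probability space and T a random variable. Let S₀ ⊆ ι satisfy: for every r ∈ ι \ S₀, T is conditionally independent of V_r given (V_j)_{j ∈ S₀}. Let S₀ ⊋ S₁ ⊋ … ⊋ S_k be a sequence of subsets such that for each m < k, S_{m+1} = S_m \ {s_m} for some s_m ∈ S_m with T conditionally independent of V_{s_m} given (V_j)_{j ∈ S_m \ {s_m}}. Then for every r ∈ ι \ S_k, T is conditionally independent of V_r given (V_j)_{j ∈ S_k}. -/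
open ProbabilityTheory MeasureTheory

section Aux
open MeasurableSpace Set

variable {Ω : Type*} {m' m₁ m₂ m₃ : MeasurableSpace Ω} {mΩ : MeasurableSpace Ω}
  [StandardBorelSpace Ω] {μ : Measure Ω} [IsProbabilityMeasure μ]

lemma sup_eq_generateFrom_inter (m' m₂ : MeasurableSpace Ω) :
    m' ⊔ m₂ = MeasurableSpace.generateFrom
      {s : Set Ω | ∃ B F, MeasurableSet[m'] B ∧ MeasurableSet[m₂] F ∧ s = B ∩ F} := by
  refine le_antisymm (sup_le ?_ ?_) (MeasurableSpace.generateFrom_le ?_)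
  · exact fun s hs => measurableSet_generateFrom ⟨s, Set.univ, hs, MeasurableSet.univ,
      (Set.inter_univ s).symm⟩
  · exact fun s hs => measurableSet_generateFrom ⟨Set.univ, s, MeasurableSet.univ, hs,
      (Set.univ_inter s).symm⟩
  · rintro t ⟨B, F, hB, hF, rfl⟩
    exact ((le_sup_left : m' ≤ m' ⊔ m₂) _ hB).inter ((le_sup_right : m₂ ≤ m' ⊔ m₂) _ hF)

lemma isPiSystem_inter_sets (m' m₂ : MeasurableSpace Ω) :
    IsPiSystem {s : Set Ω | ∃ B F, MeasurableSet[m'] B ∧ MeasurableSet[m₂] F ∧ s = B ∩ F} := by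
  rintro s ⟨B, F, hB, hF, rfl⟩ t ⟨B', F', hB', hF', rfl⟩ -
  exact ⟨B ∩ B', F ∩ F', hB.inter hB', hF.inter hF', Set.inter_inter_inter_comm B F B' F'⟩

/-- If `m₁ ⫫ m₂ | m'`, then conditioning on `m' ⊔ m₂` is the same as conditioning on `m'`
for `m₁`-measurable indicator functions. -/
lemma condexp_indicator_sup_eq_of_condIndep (hm' : m' ≤ mΩ) (hm₁ : m₁ ≤ mΩ) (hm₂ : m₂ ≤ mΩ)
    (h : CondIndep m' m₁ m₂ hm' μ) {A : Set Ω} (hA : MeasurableSet[m₁] A) :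
    (μ⟦A | m' ⊔ m₂⟧) =ᵐ[μ] μ⟦A | m'⟧ := by
  have hprod := (condIndep_iff m' m₁ m₂ hm' hm₁ hm₂ μ).mp h
  set fA : Ω → ℝ := A.indicator (fun _ => (1 : ℝ)) with hfA
  set g : Ω → ℝ := μ[fA | m'] with hg
  have hfA_int : Integrable fA μ := (integrable_const (1 : ℝ)).indicator (hm₁ A hA)
  have hg_int : Integrable g μ := integrable_condExp
  have hm : m' ⊔ m₂ ≤ mΩ := sup_le hm' hm₂
  -- set integrals of g and fA agree on the generating π-system
  have key : ∀ t : Set Ω, MeasurableSet[m' ⊔ m₂] t →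
      ∫ x in t, g x ∂μ = ∫ x in t, fA x ∂μ := by
    intro t ht
    refine @MeasurableSpace.induction_on_inter Ω (m' ⊔ m₂)
      (fun t _ => ∫ x in t, g x ∂μ = ∫ x in t, fA x ∂μ) _
      (sup_eq_generateFrom_inter m' m₂) (isPiSystem_inter_sets m' m₂) (by simp) ?_ ?_ ?_ t ht
    · -- basic sets B ∩ F
      rintro u ⟨B, F, hB, hF, rfl⟩
      have hBΩ : MeasurableSet B := hm' B hB
      have hFΩ : MeasurableSet F := hm₂ F hF
      have e1 : ∀ h : Ω → ℝ, ∫ x in B ∩ F, h x ∂μ = ∫ x in B, F.indicator h x ∂μ :=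
        fun h => (setIntegral_indicator hFΩ).symm
      rw [e1 g, e1 fA]
      set fF : Ω → ℝ := F.indicator (fun _ => (1 : ℝ)) with hfF
      have hgF : F.indicator g = g * fF := by
        funext x
        by_cases hx : x ∈ F <;> simp [hfF, Set.indicator_apply, hx]
      have hAF : F.indicator fA = (A ∩ F).indicator (fun _ => (1 : ℝ)) := by
        rw [hfA, Set.indicator_indicator, Set.inter_comm]
      have hgF_int : Integrable (g * fF) μ := by
        rw [← hgF]; exact hg_int.indicator hFΩ
      have hAF_int : Integrable ((A ∩ F).indicator (fun _ => (1 : ℝ))) μ :=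
        (integrable_const (1 : ℝ)).indicator ((hm₁ A hA).inter hFΩ)
      have hfF_int : Integrable fF μ := (integrable_const (1 : ℝ)).indicator hFΩ
      rw [hgF, hAF]
      rw [← setIntegral_condExp hm' hgF_int hB, ← setIntegral_condExp hm' hAF_int hB]
      refine setIntegral_congr_ae hBΩ ?_
      have hpull : μ[g * fF | m'] =ᵐ[μ] g * μ[fF | m'] :=
        condExp_mul_of_stronglyMeasurable_left stronglyMeasurable_condExp hgF_int hfF_int
      have hAFprod : (μ⟦A ∩ F | m'⟧) =ᵐ[μ] (μ⟦A | m'⟧) * μ⟦F | m'⟧ := hprod A F hA hF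
      filter_upwards [hAFprod, hpull] with x hx hx2
      intro _
      rw [hx2]
      exact hx.symm
    · -- complements
      intro u hu hIH
      have huΩ : MeasurableSet u := hm u hu
      have h1 := integral_add_compl huΩ hg_int
      have h2 := integral_add_compl huΩ hfA_int
      have h3 : ∫ x, g x ∂μ = ∫ x, fA x ∂μ := integral_condExp hm'
      linarith
    · -- disjoint unions
      intro f hdisj hmeas hIH
      have hfΩ : ∀ i, MeasurableSet (f i) := fun i => hm _ (hmeas i)
      rw [integral_iUnion hfΩ hdisj hg_int.integrableOn,
        integral_iUnion hfΩ hdisj hfA_int.integrableOn]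
      exact tsum_congr hIH
  refine (ae_eq_condExp_of_forall_setIntegral_eq hm hfA_int
    (fun t _ _ => hg_int.integrableOn) (fun t ht _ => key t ht) ?_).symm
  exact ((stronglyMeasurable_condExp (f := fA) (m := m') (μ := μ)).mono (le_sup_left : m' ≤ m' ⊔ m₂)).aestronglyMeasurable (μ := μ)

/-- Converse: if conditioning on `m' ⊔ m₂` equals conditioning on `m'` for all `m₁`-measurable
indicators, then `m₁ ⫫ m₂ | m'`. -/
lemma condIndep_of_condexp_indicator_sup_eq (hm' : m' ≤ mΩ) (hm₁ : m₁ ≤ mΩ) (hm₂ : m₂ ≤ mΩ)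
    (h : ∀ A : Set Ω, MeasurableSet[m₁] A → (μ⟦A | m' ⊔ m₂⟧) =ᵐ[μ] μ⟦A | m'⟧) :
    CondIndep m' m₁ m₂ hm' μ := by
  rw [condIndep_iff m' m₁ m₂ hm' hm₁ hm₂ μ]
  intro t1 t2 h1 h2
  set f1 : Ω → ℝ := t1.indicator (fun _ => (1 : ℝ)) with hf1
  set f2 : Ω → ℝ := t2.indicator (fun _ => (1 : ℝ)) with hf2
  have h12 : (t1 ∩ t2).indicator (fun _ => (1 : ℝ)) = f2 * f1 := by
    funext x
    by_cases hx1 : x ∈ t1 <;> by_cases hx2 : x ∈ t2 <;>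
      simp [hf1, hf2, Set.indicator_apply, hx1, hx2]
  have hm : m' ⊔ m₂ ≤ mΩ := sup_le hm' hm₂
  have hf1_int : Integrable f1 μ := (integrable_const (1 : ℝ)).indicator (hm₁ t1 h1)
  have hf2_int : Integrable f2 μ := (integrable_const (1 : ℝ)).indicator (hm₂ t2 h2)
  have h21_int : Integrable (f2 * f1) μ := by
    rw [← h12]; exact (integrable_const (1 : ℝ)).indicator ((hm₁ t1 h1).inter (hm₂ t2 h2))
  have hf2_sm : StronglyMeasurable[m' ⊔ m₂] f2 :=
    stronglyMeasurable_const.indicator ((le_sup_right : m₂ ≤ m' ⊔ m₂) t2 h2)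
  -- pull out f2 in the conditional expectation on m' ⊔ m₂
  have step1 : μ[f2 * f1 | m' ⊔ m₂] =ᵐ[μ] f2 * μ⟦t1 | m'⟧ := by
    refine (condExp_mul_of_stronglyMeasurable_left hf2_sm h21_int hf1_int).trans ?_
    exact Filter.EventuallyEq.mul Filter.EventuallyEq.rfl (h t1 h1)
  have tower : (μ⟦t1 ∩ t2 | m'⟧) =ᵐ[μ] μ[μ[f2 * f1 | m' ⊔ m₂] | m'] := by
    rw [h12]
    exact (condExp_condExp_of_le le_sup_left hm).symm
  have step2 : μ[μ[f2 * f1 | m' ⊔ m₂] | m'] =ᵐ[μ] μ[f2 * μ⟦t1 | m'⟧ | m'] :=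
    condExp_congr_ae step1
  have hg_sm : StronglyMeasurable[m'] (μ[f1 | m']) := stronglyMeasurable_condExp
  have hmul_int : Integrable ((μ[f1 | m']) * f2) μ := by
    have : (μ[f1 | m']) * f2 = t2.indicator (μ[f1 | m']) := by
      funext x
      by_cases hx : x ∈ t2 <;> simp [hf2, Set.indicator_apply, hx]
    rw [this]
    exact integrable_condExp.indicator (hm₂ t2 h2)
  have step3 : μ[f2 * μ⟦t1 | m'⟧ | m'] =ᵐ[μ] (μ⟦t1 | m'⟧) * μ⟦t2 | m'⟧ := by
    rw [mul_comm f2 (μ⟦t1 | m'⟧)]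
    exact condExp_mul_of_stronglyMeasurable_left hg_sm hmul_int hf2_int
  exact tower.trans (step2.trans step3)

/-- Contraction: if `m₁ ⫫ m₂ | m'` and `m₁ ⫫ m₃ | m' ⊔ m₂`, then `m₁ ⫫ m₃ | m'`. -/
lemma condIndep_contraction_s6 (hm' : m' ≤ mΩ) (hm₁ : m₁ ≤ mΩ) (hm₂ : m₂ ≤ mΩ) (hm₃ : m₃ ≤ mΩ)
    (h2 : CondIndep m' m₁ m₂ hm' μ)
    (h1 : CondIndep (m' ⊔ m₂) m₁ m₃ (sup_le hm' hm₂) μ) :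
    CondIndep m' m₁ m₃ hm' μ := by
  refine condIndep_of_condexp_indicator_sup_eq hm' hm₁ hm₃ (fun A hA => ?_)
  have e2 : (μ⟦A | m' ⊔ m₂⟧) =ᵐ[μ] μ⟦A | m'⟧ :=
    condexp_indicator_sup_eq_of_condIndep hm' hm₁ hm₂ h2 hA
  have e1 : (μ⟦A | (m' ⊔ m₂) ⊔ m₃⟧) =ᵐ[μ] μ⟦A | m' ⊔ m₂⟧ :=
    condexp_indicator_sup_eq_of_condIndep (sup_le hm' hm₂) hm₁ hm₃ h1 hA
  have t1 : (μ⟦A | (m' ⊔ m₂) ⊔ m₃⟧) =ᵐ[μ] μ⟦A | m'⟧ := e1.trans e2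
  have hle : m' ⊔ m₃ ≤ (m' ⊔ m₂) ⊔ m₃ :=
    sup_le (le_sup_left.trans le_sup_left) le_sup_right
  have t2 : (μ⟦A | m' ⊔ m₃⟧) =ᵐ[μ] μ[μ⟦A | (m' ⊔ m₂) ⊔ m₃⟧ | m' ⊔ m₃] :=
    (condExp_condExp_of_le hle (sup_le (sup_le hm' hm₂) hm₃)).symm
  have t3 : μ[μ⟦A | (m' ⊔ m₂) ⊔ m₃⟧ | m' ⊔ m₃] =ᵐ[μ] μ[μ⟦A | m'⟧ | m' ⊔ m₃] :=
    condExp_congr_ae t1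
  have t4 : μ[μ⟦A | m'⟧ | m' ⊔ m₃] = μ⟦A | m'⟧ :=
    condExp_of_stronglyMeasurable (sup_le hm' hm₃)
      (stronglyMeasurable_condExp.mono le_sup_left) integrable_condExp
  exact t2.trans (t3.trans (by rw [t4]))

lemma condIndep_congr_left {mA mB : MeasurableSpace Ω} (hAB : mA = mB)
    (hA : mA ≤ mΩ) (hB : mB ≤ mΩ) (h : CondIndep mA m₁ m₂ hA μ) :
    CondIndep mB m₁ m₂ hB μ := by subst hAB; exact h

lemma famAlg_diff_sup {ι : Type*} (V : ι → Ω → ℝ) {S : Set ι} {a : ι} (ha : a ∈ S) :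
    famAlg V S = famAlg V (S \ {a}) ⊔ MeasurableSpace.comap (V a) inferInstance := by
  calc famAlg V S = famAlg V (insert a (S \ {a})) := by
        rw [Set.insert_diff_singleton, Set.insert_eq_self.mpr ha]
    _ = famAlg V (S \ {a}) ⊔ MeasurableSpace.comap (V a) inferInstance := by
        simp only [famAlg, iSup_insert]
        exact sup_comm _ _

theorem backward_removals_invariance_aux {Ω ι : Type*} {mΩ : MeasurableSpace Ω}
    [StandardBorelSpace Ω] [Fintype ι] (μ : Measure Ω) [IsProbabilityMeasure μ]
    (T : Ω → ℝ) (V : ι → Ω → ℝ) (hT : Measurable T) (hV : ∀ i, Measurable (V i))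
    (S : ℕ → Set ι) (s : ℕ → ι)
    (h0 : ∀ r ∈ Set.univ \ S 0, CondIndepVarFam μ T V hV r (S 0)) :
    ∀ k : ℕ, (∀ m < k, s m ∈ S m) → (∀ m < k, S (m + 1) = S m \ {s m}) →
      (∀ m < k, CondIndepVarFam μ T V hV (s m) (S m \ {s m})) →
      ∀ r ∈ Set.univ \ S k, CondIndepVarFam μ T V hV r (S k) := by
  intro k
  induction k with
  | zero => exact fun _ _ _ => h0
  | succ n IH =>
    intro hmem hstep hind r hr
    have hlt : n < n + 1 := Nat.lt_succ_self n
    have hS : S (n + 1) = S n \ {s n} := hstep n hlt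
    have hsn : s n ∈ S n := hmem n hlt
    have IH' := IH (fun m hm => hmem m (Nat.lt_succ_of_lt hm))
      (fun m hm => hstep m (Nat.lt_succ_of_lt hm))
      (fun m hm => hind m (Nat.lt_succ_of_lt hm))
    rw [hS] at hr ⊢
    by_cases hrs : r = s n
    · subst hrs
      exact hind n hlt
    · have hrn : r ∉ S n := by
        intro hrS
        exact hr.2 ⟨hrS, by simpa using hrs⟩
      have hIH : CondIndep (famAlg V (S n)) (MeasurableSpace.comap T inferInstance)
          (MeasurableSpace.comap (V r) inferInstance) (famAlg_le hV _) μ :=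
        IH' r ⟨Set.mem_univ r, hrn⟩
      have hdecomp := famAlg_diff_sup V hsn
      have h1 : CondIndep
          (famAlg V (S n \ {s n}) ⊔ MeasurableSpace.comap (V (s n)) inferInstance)
          (MeasurableSpace.comap T inferInstance)
          (MeasurableSpace.comap (V r) inferInstance)
          (sup_le (famAlg_le hV _) ((hV (s n)).comap_le)) μ :=
        condIndep_congr_left hdecomp (famAlg_le hV _) _ hIH
      exact condIndep_contraction_s6 (famAlg_le hV _) hT.comap_le ((hV (s n)).comap_le)
        ((hV r).comap_le) (hind n hlt) h1

end Aux

/-- Invariance of non-addability under a sequence of backward removals. -/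
theorem backward_removals_invariance {Ω ι : Type*} {mΩ : MeasurableSpace Ω}
    [StandardBorelSpace Ω] [Fintype ι] (μ : Measure Ω) [IsProbabilityMeasure μ]
    (T : Ω → ℝ) (V : ι → Ω → ℝ) (hT : Measurable T) (hV : ∀ i, Measurable (V i))
    (k : ℕ) (S : ℕ → Set ι) (s : ℕ → ι)
    (h0 : ∀ r ∈ Set.univ \ S 0, CondIndepVarFam μ T V hV r (S 0))
    (hmem : ∀ m < k, s m ∈ S m)
    (hstep : ∀ m < k, S (m + 1) = S m \ {s m})
    (hind : ∀ m < k, CondIndepVarFam μ T V hV (s m) (S m \ {s m})) :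
    ∀ r ∈ Set.univ \ S k, CondIndepVarFam μ T V hV r (S k) := by
  exact backward_removals_invariance_aux μ T V hT hV S s h0 k hmem hstep hind
end
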